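/- For every natural number k, every oriented graph D with minimum semidegree δ⁰(D) ≥ k contains every orientation of the path with k edges. -/

import Mathlib

/-- Out-degree of `v` in the digraph given by the edge relation `D`. -/
noncomputable def outDeg {V : Type*} (D : V → V → Prop) (v : V) : ℕ := {w | D v w}.ncard

/-- In-degree of `v` in the digraph given by the edge relation `D`. -/
noncomputable def inDeg {V : Type*} (D : V → V → Prop) (v : V) : ℕ := {w | D w v}.ncard

/-- `D` is an oriented graph: for each pair of vertices, at most one of the edges
`uv`, `vu` is present (in particular there are no loops). -/
def IsOriented {V : Type*} (D : V → V → Prop) : Prop := ∀ u v, D u v → ¬ D v u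

/-- The number of (directed) edges of the digraph `D`. -/
noncomputable def edgeCount {V : Type*} (D : V → V → Prop) : ℕ := {p : V × V | D p.1 p.2}.ncard

/-- The minimum pseudo-semidegree of `D` is at least `x`: `D` has an edge, and every
vertex has out-degree `0` or at least `x`, and in-degree `0` or at least `x`. -/
def PseudoGE {V : Type*} (D : V → V → Prop) (x : ℝ) : Prop :=
  (∃ u v, D u v) ∧
    ∀ v, (outDeg D v = 0 ∨ x ≤ (outDeg D v : ℝ)) ∧ (inDeg D v = 0 ∨ x ≤ (inDeg D v : ℝ))

/-- The minimum pseudo-semidegree of `D` is strictly greater than `x`. -/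
def PseudoGT {V : Type*} (D : V → V → Prop) (x : ℝ) : Prop :=
  (∃ u v, D u v) ∧
    ∀ v, (outDeg D v = 0 ∨ x < (outDeg D v : ℝ)) ∧ (inDeg D v = 0 ∨ x < (inDeg D v : ℝ))

/-- `f, g` describe an antidirected path `f 0, f 1, ..., f m` (of length `m`) in `D`:
`g i = true` iff the `i`-th edge is directed from `f i` towards `f (i+1)`, and consecutive
edges alternate in direction (equivalently, every vertex of the path has out-degree `0`
or in-degree `0` on the path). -/
def IsAntipath {V : Type*} (D : V → V → Prop) (m : ℕ) (f : ℕ → V) (g : ℕ → Bool) : Prop :=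
  Set.InjOn f (Set.Iic m) ∧
  (∀ i < m, if g i then D (f i) (f (i + 1)) else D (f (i + 1)) (f i)) ∧
  (∀ i, i + 1 < m → g i ≠ g (i + 1))

/-- `D` contains each of the (at most two) antidirected paths of length `k`:
for each initial direction `b` there is an antidirected path of length `k`
whose first edge has direction `b`. -/
def ContainsAllAntipaths {V : Type*} (D : V → V → Prop) (k : ℕ) : Prop :=
  ∀ b : Bool, ∃ f g, IsAntipath D k f g ∧ g 0 = b

/-- `f` describes an antidirected cycle of length `n` in `D`: the `i`-th edge joins
`f i` and `f (i+1)` and is directed from `f i` iff `g i = true`; every vertex `f i`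
has out-degree `0` on the cycle (i.e. `g i = false ∧ g (i-1) = true`) or in-degree `0`
on the cycle (i.e. `g i = true ∧ g (i-1) = false`). -/
def IsAnticycle {V : Type*} (D : V → V → Prop) (n : ℕ) [NeZero n] (f : ZMod n → V) : Prop :=
  3 ≤ n ∧ Function.Injective f ∧
  ∃ g : ZMod n → Bool,
    (∀ i, if g i then D (f i) (f (i + 1)) else D (f (i + 1)) (f i)) ∧
    (∀ i : ZMod n, (g i = false ∧ g (i - 1) = true) ∨ (g i = true ∧ g (i - 1) = false))

/-- Every oriented graph with minimum semidegree at least `k` contains every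
orientation of the path with `k` edges. -/
theorem stmt_3 {V : Type*} [Fintype V] [Nonempty V] (D : V → V → Prop)
    (hor : IsOriented D) (k : ℕ)
    (hdeg : ∀ v, k ≤ outDeg D v ∧ k ≤ inDeg D v) :
    ∀ g : ℕ → Bool, ∃ f : ℕ → V, Set.InjOn f (Set.Iic k) ∧
      ∀ i < k, if g i then D (f i) (f (i + 1)) else D (f (i + 1)) (f i) := by
  intro g
  suffices h : ∀ m, m ≤ k → ∃ f : ℕ → V, Set.InjOn f (Set.Iic m) ∧
      ∀ i < m, if g i then D (f i) (f (i + 1)) else D (f (i + 1)) (f i) from h k le_rfl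
  intro m
  induction m with
  | zero =>
    intro _
    refine ⟨fun _ => Classical.arbitrary V, ?_, by omega⟩
    intro a ha b hb _
    simp only [Set.mem_Iic, Nat.le_zero] at ha hb
    omega
  | succ m ih =>
    intro hmk
    obtain ⟨f, hinj, hedge⟩ := ih (by omega)
    have hmem : f m ∈ f '' Set.Iic m := ⟨m, by simp, rfl⟩
    have hS : (f '' Set.Iic m \ {f m}).ncard < k := by
      have h1 : (f '' Set.Iic m).ncard ≤ m + 1 := by
        calc (f '' Set.Iic m).ncard ≤ (Set.Iic m).ncard :=
              Set.ncard_image_le (Set.finite_Iic m)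
          _ = m + 1 := by
              rw [← Finset.coe_Iic, Set.ncard_coe_finset]; simp
      have h2 := Set.ncard_diff_singleton_lt_of_mem hmem (Set.toFinite _)
      omega
    have noloop : ¬ D (f m) (f m) := fun h => hor _ _ h h
    have key : ∃ w, (if g m then D (f m) w else D w (f m)) ∧ w ∉ f '' Set.Iic m := by
      by_contra hc
      push_neg at hc
      cases hb : g m with
      | true =>
        have hsub : {w | D (f m) w} ⊆ f '' Set.Iic m \ {f m} := by
          intro w hw
          have := hc w (by simpa [hb] using hw)
          exact ⟨this, fun h => noloop (by rwa [Set.mem_singleton_iff.mp h] at hw)⟩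
        have := Set.ncard_le_ncard hsub (Set.toFinite _)
        have hk := (hdeg (f m)).1
        rw [outDeg] at hk
        omega
      | false =>
        have hsub : {w | D w (f m)} ⊆ f '' Set.Iic m \ {f m} := by
          intro w hw
          have := hc w (by simpa [hb] using hw)
          exact ⟨this, fun h => noloop (by rwa [Set.mem_singleton_iff.mp h] at hw)⟩
        have := Set.ncard_le_ncard hsub (Set.toFinite _)
        have hk := (hdeg (f m)).2
        rw [inDeg] at hk
        omega
    obtain ⟨w, hw, hwnot⟩ := key
    refine ⟨fun i => if i ≤ m then f i else w, ?_, ?_⟩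
    · intro a ha b hb hab
      simp only [Set.mem_Iic] at ha hb
      by_cases ha' : a ≤ m <;> by_cases hb' : b ≤ m <;>
        simp only [ha', hb', if_pos, if_neg, if_true, if_false] at hab
      · exact hinj (Set.mem_Iic.mpr ha') (Set.mem_Iic.mpr hb') hab
      · exact absurd ⟨a, Set.mem_Iic.mpr ha', hab⟩ hwnot
      · exact absurd ⟨b, Set.mem_Iic.mpr hb', hab.symm⟩ hwnot
      · omega
    · intro i hi
      rcases Nat.lt_succ_iff_lt_or_eq.mp hi with hi' | rfl
      · have h1 : i ≤ m := by omega
        have h2 : i + 1 ≤ m := by omega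
        simpa only [h1, h2, if_true, if_pos] using hedge i hi'
      · have h1 : i ≤ i := le_rfl
        have h2 : ¬ i + 1 ≤ i := by omega
        simpa only [h1, h2, if_true, if_pos, if_neg, ↓reduceIte] using hw
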